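/- Let A be an n×m matrix over a field F and let K be its kernel. Let B be a basis of F^m such that every vector v in B \ K is i-unique for some i (i.e., (Av)_i ≠ 0 but (Aw)_i = 0 for every other w in B). Then rank(A) = m − |B ∩ K|. -/

import Mathlib

/-- If `B` is an `A`-good basis of `F^m` (every basis vector outside the kernel is
`i`-unique for some `i`), then `rank(A) = m - |B ∩ K|` where `K` is the kernel of `A`. -/
theorem stmt_0 {F : Type*} [Field F] {n m : ℕ}
    (A : Matrix (Fin n) (Fin m) F) (B : Set (Fin m → F))
    (hBli : LinearIndependent F ((↑) : B → (Fin m → F)))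
    (hBsp : Submodule.span F B = ⊤)
    (hgood : ∀ v ∈ B, A.mulVec v ≠ 0 →
      ∃ i, A.mulVec v i ≠ 0 ∧ ∀ w ∈ B, w ≠ v → A.mulVec w i = 0) :
    A.rank = m - (B ∩ {v | A.mulVec v = 0}).ncard := by
  classical
  have hBfin : B.Finite := hBli.setFinite
  haveI : Fintype B := hBfin.fintype
  let b : Module.Basis B F (Fin m → F) := Module.Basis.mk hBli (by rw [Subtype.range_coe]; exact hBsp.ge)
  have hb : ∀ w : B, b w = (w : Fin m → F) := fun w => Module.Basis.mk_apply _ _ _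
  have hker : LinearMap.ker A.mulVecLin =
      Submodule.span F (B ∩ {v | A.mulVec v = 0}) := by
    apply le_antisymm
    · intro v hv
      have hv0 : A.mulVec v = 0 := hv
      have hrep : ∑ w : B, b.repr v w • (w : Fin m → F) = v := by
        simpa [hb] using b.sum_repr v
      have hcoef : ∀ w : B, A.mulVec (w : Fin m → F) ≠ 0 → b.repr v w = 0 := by
        intro w hw
        obtain ⟨i, hi, hothers⟩ := hgood w w.2 hw
        have h1 : ∑ u : B, b.repr v u • A.mulVec (u : Fin m → F) = 0 := by
          have h := congrArg A.mulVecLin hrep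
          rw [map_sum] at h
          simp only [map_smul, Matrix.mulVecLin_apply] at h
          rw [h]; exact hv0
        have h2 := congrFun h1 i
        simp only [Finset.sum_apply, Pi.smul_apply, Pi.zero_apply, smul_eq_mul] at h2
        rw [Finset.sum_eq_single w] at h2
        · exact (mul_eq_zero.mp h2).resolve_right hi
        · intro u _ hu
          rw [hothers u u.2 (fun h => hu (Subtype.ext h)), mul_zero]
        · intro h; exact absurd (Finset.mem_univ w) h
      rw [← hrep]
      apply Submodule.sum_mem
      intro w _
      by_cases hw : A.mulVec (w : Fin m → F) = 0
      · exact Submodule.smul_mem _ _ (Submodule.subset_span ⟨w.2, hw⟩)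
      · rw [hcoef w hw, zero_smul]; exact Submodule.zero_mem _
    · rw [Submodule.span_le]
      rintro w ⟨-, hw⟩
      exact hw
  have hli2 : LinearIndependent F ((↑) : ↥(B ∩ {v | A.mulVec v = 0}) → (Fin m → F)) :=
    LinearIndepOn.mono (v := id) (s := B) hBli Set.inter_subset_left
  haveI : Fintype ↥(B ∩ {v | A.mulVec v = 0}) :=
    (hBfin.inter_of_left _).fintype
  have hkerrank : Module.finrank F (LinearMap.ker A.mulVecLin) =
      (B ∩ {v | A.mulVec v = 0}).ncard := by
    rw [hker, finrank_span_set_eq_card hli2, Set.ncard_eq_toFinset_card']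
  have hrn := LinearMap.finrank_range_add_finrank_ker A.mulVecLin
  rw [Module.finrank_fintype_fun_eq_card, Fintype.card_fin] at hrn
  rw [Matrix.rank]
  omega
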